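/- Let Y be a measurable space, π₀ a probability measure on Y, and r : Y → ℝ measurable, with π₀ a continuous model for r. Let β > 0, Φ : [0,1] → ℝ bounded measurable, and let π* be the probability measure with density y ↦ e^{Φ(C_{r,π₀}(y))/β}/Z with respect to π₀, where Z := ∫₀¹ e^{Φ(u)/β} du. Let g : [0,1] → [0,∞) be bounded measurable with ∫₀¹ g(t) dt > 0, and for a probability measure σ on Y define the calibrated inference-time policy T_g σ as the probability measure with density y ↦ g(C_{r,σ}(y)) / ∫ g(C_{r,σ}(z)) dσ(z) with respect to σ. Then the inference-time win rate satisfies W_r(T_g π* ≻ T_g π₀) = (∫₀¹ e^{Φ(u)/β}·g(F_{Φ,β}(u))·(∫₀ᵘ g(t) dt) du) / ((∫₀¹ e^{Φ(u)/β}·g(F_{Φ,β}(u)) du)·(∫₀¹ g(t) dt)); in particular it depends only on Φ, β and g, not on r or π₀. -/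

import Mathlib

open MeasureTheory

/-- The calibrated reward `C_{r,σ}(y) = σ{z : r(z) < r(y)} + (1/2)·σ{z : r(z) = r(y)}`. -/
noncomputable def calReward {Y : Type*} [MeasurableSpace Y]
    (r : Y → ℝ) (σ : Measure Y) (y : Y) : ℝ :=
  (σ {z | r z < r y}).toReal + (1 / 2) * (σ {z | r z = r y}).toReal

/-- The calibrated inference-time policy `T_g σ`, with density
`y ↦ g(C_{r,σ}(y)) / ∫ g(C_{r,σ}(z)) dσ(z)` with respect to `σ`. -/
noncomputable def calProc {Y : Type*} [MeasurableSpace Y]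
    (r : Y → ℝ) (g : ℝ → ℝ) (σ : Measure Y) : Measure Y :=
  σ.withDensity fun y =>
    ENNReal.ofReal (g (calReward r σ y) / ∫ z, g (calReward r σ z) ∂σ)

section Auxiliary

open Set Filter
open scoped Topology ENNReal

/-- Probability integral transform: pushing an atomless probability measure on `ℝ`
forward by its own (left-continuous) cdf gives the uniform measure on `(0,1]`. -/
theorem uniform_cdf_aux (ν : Measure ℝ) [IsProbabilityMeasure ν] (hν : ∀ t : ℝ, ν {t} = 0) :
    ν.map (fun x => (ν (Set.Iio x)).toReal) = volume.restrict (Set.Ioc 0 1) := by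
  set F : ℝ → ℝ := fun x => (ν (Set.Iio x)).toReal with hFdef
  have hmono : Monotone F := fun a b hab =>
    ENNReal.toReal_mono (measure_ne_top _ _) (measure_mono (Set.Iio_subset_Iio hab))
  have hmeas : Measurable F := hmono.measurable
  have hofReal : ∀ x, ν (Set.Iio x) = ENNReal.ofReal (F x) := fun x =>
    (ENNReal.ofReal_toReal (measure_ne_top _ _)).symm
  have hF0 : ∀ x, 0 ≤ F x := fun x => ENNReal.toReal_nonneg
  have hF1 : ∀ x, F x ≤ 1 := fun x => by
    have : ν (Set.Iio x) ≤ 1 := prob_le_one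
    calc F x ≤ (1 : ℝ≥0∞).toReal := ENNReal.toReal_mono ENNReal.one_ne_top this
      _ = 1 := by simp
  have hIicIio : ∀ s : ℝ, ν (Set.Iic s) = ν (Set.Iio s) :=
    fun s => (measure_congr (Iio_ae_eq_Iic' (hν s))).symm
  have key : ∀ a : ℝ, 0 ≤ a → a < 1 → ν {x | F x ≤ a} = ENNReal.ofReal a := by
    intro a ha0 ha1
    -- bddAbove of S
    have htop : Tendsto (fun x => ν (Set.Iic x)) atTop (𝓝 1) := by
      simpa [measure_univ] using tendsto_measure_Iic_atTop (μ := ν)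
    have hlt1 : ENNReal.ofReal a < 1 := by
      rw [← ENNReal.ofReal_one]
      exact ENNReal.ofReal_lt_ofReal_iff_of_nonneg ha0 |>.2 ha1
    obtain ⟨x₁, hx₁⟩ := (htop.eventually (eventually_gt_nhds hlt1)).exists
    have hFgt : a < F (x₁ + 1) := by
      have h1 : ν (Set.Iic x₁) ≤ ν (Set.Iio (x₁ + 1)) :=
        measure_mono (fun y hy => by
          simp only [Set.mem_Iic] at hy
          exact Set.mem_Iio.2 (by linarith))
      have h2 : ENNReal.ofReal a < ν (Set.Iio (x₁ + 1)) := lt_of_lt_of_le hx₁ h1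
      rw [hofReal (x₁ + 1)] at h2
      exact (ENNReal.ofReal_lt_ofReal_iff_of_nonneg ha0).1 h2
    have hbdd : BddAbove {x | F x ≤ a} := by
      refine ⟨x₁ + 1, fun x hx => ?_⟩
      by_contra h
      push_neg at h
      exact absurd (le_trans (hmono h.le) hx) (not_le.2 hFgt)
    have hub : ν {x | F x ≤ a} ≤ ENNReal.ofReal a := by
      rcases Set.eq_empty_or_nonempty {x | F x ≤ a} with hS | hS
      · simp [hS]
      set s := sSup {x | F x ≤ a} with hs
      have hle : ∀ x, x < s → ν (Set.Iio x) ≤ ENNReal.ofReal a := by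
        intro x hx
        obtain ⟨x', hx'S, hxx'⟩ := exists_lt_of_lt_csSup hS hx
        calc ν (Set.Iio x) ≤ ν (Set.Iio x') := measure_mono (Set.Iio_subset_Iio hxx'.le)
          _ = ENNReal.ofReal (F x') := hofReal x'
          _ ≤ ENNReal.ofReal a := ENNReal.ofReal_le_ofReal hx'S
      have hIio : ν (Set.Iio s) ≤ ENNReal.ofReal a := by
        have hseq : Monotone (fun n : ℕ => Set.Iio (s - 1 / ((n : ℝ) + 1))) := by
          intro n m hnm
          apply Set.Iio_subset_Iio
          have h1 : (1 : ℝ) / ((m : ℝ) + 1) ≤ 1 / ((n : ℝ) + 1) := by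
            apply one_div_le_one_div_of_le (by positivity)
            have := (Nat.cast_le (α := ℝ)).2 hnm
            linarith
          linarith
        have hU : (⋃ n : ℕ, Set.Iio (s - 1 / ((n : ℝ) + 1))) = Set.Iio s := by
          ext x
          simp only [Set.mem_iUnion, Set.mem_Iio]
          constructor
          · rintro ⟨n, hn⟩
            have : (0 : ℝ) < 1 / ((n : ℝ) + 1) := by positivity
            linarith
          · intro hx
            obtain ⟨n, hn⟩ := exists_nat_gt (1 / (s - x))
            refine ⟨n, ?_⟩
            have h0 : 0 < s - x := by linarith
            have hn0 : 0 < (n : ℝ) := lt_trans (by positivity) hn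
            have h1 : 1 / ((n : ℝ) + 1) < s - x := by
              rw [div_lt_iff₀ (by positivity)]
              rw [div_lt_iff₀ h0] at hn
              nlinarith
            linarith
        have := tendsto_measure_iUnion_atTop (μ := ν) hseq
        rw [hU] at this
        refine le_of_tendsto this (Eventually.of_forall fun n => ?_)
        refine hle _ ?_
        have : (0 : ℝ) < 1 / ((n : ℝ) + 1) := by positivity
        linarith
      calc ν {x | F x ≤ a} ≤ ν (Set.Iic s) :=
            measure_mono (fun x hx => le_csSup hbdd hx)
        _ = ν (Set.Iio s) := hIicIio s
        _ ≤ ENNReal.ofReal a := hIio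
    have hlb : ENNReal.ofReal a ≤ ν {x | F x ≤ a} := by
      rcases eq_or_lt_of_le ha0 with ha | ha
      · simp [← ha]
      -- S is nonempty
      have hbot : Tendsto (fun x : ℝ => ν (Set.Iic x)) atBot (𝓝 0) := by
        have hmon : Monotone (fun x : ℝ => Set.Iic x) := monotone_Iic
        have hint : (⋂ x : ℝ, Set.Iic x) = ∅ := by
          ext y; simp only [Set.mem_iInter, Set.mem_Iic, Set.mem_empty_iff_false, iff_false,
            not_forall, not_le]
          exact ⟨y - 1, by linarith⟩
        have := tendsto_measure_iInter_atBot (μ := ν)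
          (fun x => (measurableSet_Iic).nullMeasurableSet) hmon ⟨0, measure_ne_top _ _⟩
        rwa [hint, measure_empty] at this
      have hapos : (0 : ℝ≥0∞) < ENNReal.ofReal a := ENNReal.ofReal_pos.2 ha
      obtain ⟨x₀, hx₀⟩ := (hbot.eventually (eventually_lt_nhds hapos)).exists
      have hx₀S : x₀ ∈ {x | F x ≤ a} := by
        have h1 : ν (Set.Iio x₀) < ENNReal.ofReal a :=
          lt_of_le_of_lt (measure_mono Set.Iio_subset_Iic_self) hx₀
        rw [hofReal x₀] at h1
        exact le_of_lt ((ENNReal.ofReal_lt_ofReal_iff_of_nonneg (hF0 x₀)).1 h1)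
      have hS : Set.Nonempty {x | F x ≤ a} := ⟨x₀, hx₀S⟩
      set s := sSup {x | F x ≤ a} with hs
      have hIiosub : Set.Iio s ⊆ {x | F x ≤ a} := by
        intro x hx
        obtain ⟨x', hx'S, hxx'⟩ := exists_lt_of_lt_csSup hS hx
        exact le_trans (hmono hxx'.le) hx'S
      have hFs : a ≤ F s := by
        by_contra h
        push_neg at h
        -- right continuity: find a point beyond s still in S
        have hseq : Antitone (fun n : ℕ => Set.Iic (s + 1 / ((n : ℝ) + 1))) := by
          intro n m hnm
          apply Set.Iic_subset_Iic.2
          have h1 : (1 : ℝ) / ((m : ℝ) + 1) ≤ 1 / ((n : ℝ) + 1) := by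
            apply one_div_le_one_div_of_le (by positivity)
            have := (Nat.cast_le (α := ℝ)).2 hnm
            linarith
          linarith
        have hI : (⋂ n : ℕ, Set.Iic (s + 1 / ((n : ℝ) + 1))) = Set.Iic s := by
          ext x
          simp only [Set.mem_iInter, Set.mem_Iic]
          constructor
          · intro hx
            by_contra hxs
            push_neg at hxs
            obtain ⟨n, hn⟩ := exists_nat_gt (1 / (x - s))
            have h0 : 0 < x - s := by linarith
            have hn0 : 0 < (n : ℝ) := lt_trans (by positivity) hn
            have h1 : 1 / ((n : ℝ) + 1) < x - s := by
              rw [div_lt_iff₀ (by positivity)]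
              rw [div_lt_iff₀ h0] at hn
              nlinarith
            have := hx n
            linarith
          · intro hx n
            have : (0 : ℝ) < 1 / ((n : ℝ) + 1) := by positivity
            linarith
        have htendsto := tendsto_measure_iInter_atTop (μ := ν)
          (fun n => measurableSet_Iic.nullMeasurableSet) hseq ⟨0, measure_ne_top _ _⟩
        rw [hI] at htendsto
        have hlim : ν (Set.Iic s) < ENNReal.ofReal a := by
          rw [hIicIio s, hofReal s]
          exact (ENNReal.ofReal_lt_ofReal_iff ha).2 h
        obtain ⟨n, hn⟩ := (htendsto.eventually (eventually_lt_nhds hlim)).exists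
        have hmem : s + 1 / ((n : ℝ) + 1) ∈ {x | F x ≤ a} := by
          have h1 : ν (Set.Iio (s + 1 / ((n : ℝ) + 1))) < ENNReal.ofReal a :=
            lt_of_le_of_lt (measure_mono Set.Iio_subset_Iic_self) hn
          rw [hofReal] at h1
          exact le_of_lt ((ENNReal.ofReal_lt_ofReal_iff_of_nonneg (hF0 _)).1 h1)
        have : s + 1 / ((n : ℝ) + 1) ≤ s := le_csSup hbdd hmem
        have hpos : (0 : ℝ) < 1 / ((n : ℝ) + 1) := by positivity
        linarith
      calc ENNReal.ofReal a ≤ ENNReal.ofReal (F s) := ENNReal.ofReal_le_ofReal hFs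
        _ = ν (Set.Iio s) := (hofReal s).symm
        _ ≤ ν {x | F x ≤ a} := measure_mono hIiosub
    exact le_antisymm hub hlb
  haveI : IsProbabilityMeasure (ν.map F) := Measure.isProbabilityMeasure_map hmeas.aemeasurable
  haveI : IsProbabilityMeasure (volume.restrict (Set.Ioc (0:ℝ) 1)) :=
    ⟨by simp [Real.volume_Ioc]⟩
  refine Measure.ext_of_Iic _ _ (fun a => ?_)
  rw [Measure.map_apply hmeas measurableSet_Iic, Measure.restrict_apply measurableSet_Iic]
  have hpre : F ⁻¹' Set.Iic a = {x | F x ≤ a} := rfl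
  rcases lt_or_ge a 0 with ha | ha
  · have h1 : {x | F x ≤ a} = ∅ := by
      ext x; simp only [Set.mem_setOf_eq, Set.mem_empty_iff_false, iff_false, not_le]
      exact lt_of_lt_of_le ha (hF0 x)
    have h2 : Set.Iic a ∩ Set.Ioc 0 1 = ∅ := by
      ext x; simp only [Set.mem_inter_iff, Set.mem_Iic, Set.mem_Ioc, Set.mem_empty_iff_false,
        iff_false, not_and]
      intro hx hx0
      linarith
    rw [hpre, h1, h2, measure_empty, measure_empty]
  rcases lt_or_ge a 1 with ha1 | ha1
  · rw [hpre, key a ha ha1]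
    have h2 : Set.Iic a ∩ Set.Ioc 0 1 = Set.Ioc 0 a := by
      ext x
      simp only [Set.mem_inter_iff, Set.mem_Iic, Set.mem_Ioc]
      constructor
      · rintro ⟨h1, h2, h3⟩; exact ⟨h2, h1⟩
      · rintro ⟨h1, h2⟩; exact ⟨h2, h1, by linarith⟩
    rw [h2, Real.volume_Ioc, sub_zero]
  · have h1 : {x | F x ≤ a} = Set.univ := by
      ext x; simp only [Set.mem_setOf_eq, Set.mem_univ, iff_true]
      exact le_trans (hF1 x) ha1
    have h2 : Set.Iic a ∩ Set.Ioc 0 1 = Set.Ioc 0 1 := by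
      apply Set.inter_eq_right.2
      intro x hx
      exact le_trans hx.2 ha1
    rw [hpre, h1, h2, measure_univ, Real.volume_Ioc, sub_zero, ENNReal.ofReal_one]

variable {Y : Type*} [MeasurableSpace Y] {μ : Measure Y} [IsProbabilityMeasure μ] {r : Y → ℝ}

theorem calReward_eq_cdf (hr : Measurable r) (hcont : ∀ t : ℝ, μ {z | r z = t} = 0) (y : Y) :
    calReward r μ y = ((μ.map r) (Set.Iio (r y))).toReal := by
  unfold calReward
  have h1 : (μ.map r) (Set.Iio (r y)) = μ {z | r z < r y} := by
    rw [Measure.map_apply hr measurableSet_Iio]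
    rfl
  rw [h1, hcont (r y)]
  simp

theorem map_calReward (hr : Measurable r) (hcont : ∀ t : ℝ, μ {z | r z = t} = 0) :
    μ.map (calReward r μ) = volume.restrict (Set.Ioc 0 1) := by
  haveI : IsProbabilityMeasure (μ.map r) := Measure.isProbabilityMeasure_map hr.aemeasurable
  have hν : ∀ t : ℝ, (μ.map r) {t} = 0 := fun t => by
    rw [Measure.map_apply hr (measurableSet_singleton t)]
    have : r ⁻¹' {t} = {z | r z = t} := by ext z; simp
    rw [this]; exact hcont t
  have hfun : calReward r μ = (fun x => ((μ.map r) (Set.Iio x)).toReal) ∘ r :=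
    funext fun y => calReward_eq_cdf hr hcont y
  have hmono : Monotone (fun x => ((μ.map r) (Set.Iio x)).toReal) := fun a b hab =>
    ENNReal.toReal_mono (measure_ne_top _ _) (measure_mono (Set.Iio_subset_Iio hab))
  rw [hfun, ← Measure.map_map hmono.measurable hr, uniform_cdf_aux _ hν]

theorem calReward_measurable (hr : Measurable r) (hcont : ∀ t : ℝ, μ {z | r z = t} = 0) :
    Measurable (calReward r μ) := by
  have hfun : calReward r μ = (fun x => ((μ.map r) (Set.Iio x)).toReal) ∘ r :=
    funext fun y => calReward_eq_cdf hr hcont y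
  have hmono : Monotone (fun x => ((μ.map r) (Set.Iio x)).toReal) := fun a b hab =>
    ENNReal.toReal_mono (measure_ne_top _ _) (measure_mono (Set.Iio_subset_Iio hab))
  rw [hfun]
  exact hmono.measurable.comp hr

theorem calReward_mem (hr : Measurable r) (hcont : ∀ t : ℝ, μ {z | r z = t} = 0) (y : Y) :
    calReward r μ y ∈ Set.Icc (0 : ℝ) 1 := by
  haveI : IsProbabilityMeasure (μ.map r) := Measure.isProbabilityMeasure_map hr.aemeasurable
  rw [calReward_eq_cdf hr hcont y]
  refine ⟨ENNReal.toReal_nonneg, ?_⟩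
  calc ((μ.map r) (Set.Iio (r y))).toReal ≤ (1 : ℝ≥0∞).toReal :=
        ENNReal.toReal_mono ENNReal.one_ne_top prob_le_one
    _ = 1 := by simp

theorem calReward_mono (hr : Measurable r) (hcont : ∀ t : ℝ, μ {z | r z = t} = 0)
    {w z : Y} (h : r w ≤ r z) : calReward r μ w ≤ calReward r μ z := by
  rw [calReward_eq_cdf hr hcont, calReward_eq_cdf hr hcont]
  exact ENNReal.toReal_mono (measure_ne_top _ _) (measure_mono (Set.Iio_subset_Iio h))

theorem lintegral_calReward (hr : Measurable r) (hcont : ∀ t : ℝ, μ {z | r z = t} = 0)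
    {h : ℝ → ℝ≥0∞} (hh : AEMeasurable h (volume.restrict (Set.Ioc (0:ℝ) 1))) :
    ∫⁻ z, h (calReward r μ z) ∂μ = ∫⁻ u in Set.Ioc (0:ℝ) 1, h u := by
  rw [← lintegral_map' (by rwa [map_calReward hr hcont])
      (calReward_measurable hr hcont).aemeasurable, map_calReward hr hcont]

theorem integral_calReward (hr : Measurable r) (hcont : ∀ t : ℝ, μ {z | r z = t} = 0)
    {q : ℝ → ℝ} (hq : AEStronglyMeasurable q (volume.restrict (Set.Ioc (0:ℝ) 1))) :
    ∫ z, q (calReward r μ z) ∂μ = ∫ u in Set.Ioc (0:ℝ) 1, q u := by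
  rw [← integral_map (calReward_measurable hr hcont).aemeasurable
      (by rwa [map_calReward hr hcont]), map_calReward hr hcont]

theorem setLIntegral_calReward (hr : Measurable r) (hcont : ∀ t : ℝ, μ {z | r z = t} = 0)
    (y : Y) {h : ℝ → ℝ≥0∞} (hh : AEMeasurable h (volume.restrict (Set.Ioc (0:ℝ) 1))) :
    ∫⁻ z in {z | r z < r y}, h (calReward r μ z) ∂μ
      = ∫⁻ u in Set.Ioo (0:ℝ) (calReward r μ y), h u := by
  have hcmeas := calReward_measurable hr hcont
  set c := calReward r μ y with hc
  have hcmem := calReward_mem hr hcont y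
  have hnull : μ {z | calReward r μ z = c} = 0 := by
    have h1 : {z | calReward r μ z = c} = calReward r μ ⁻¹' {c} := by ext z; simp
    rw [h1, ← Measure.map_apply hcmeas (measurableSet_singleton c), map_calReward hr hcont,
      Measure.restrict_apply (measurableSet_singleton c)]
    exact measure_mono_null Set.inter_subset_left (measure_singleton c)
  have hsets : {z | r z < r y} =ᵐ[μ] {z | calReward r μ z < c} := by
    rw [MeasureTheory.ae_eq_set]
    constructor
    · refine measure_mono_null ?_ hnull
      intro z hz
      simp only [Set.mem_diff, Set.mem_setOf_eq, not_lt] at hz ⊢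
      exact le_antisymm (calReward_mono hr hcont hz.1.le) hz.2
    · have : {z | calReward r μ z < c} \ {z | r z < r y} = ∅ := by
        ext z
        simp only [Set.mem_diff, Set.mem_setOf_eq, not_lt, Set.mem_empty_iff_false, iff_false,
          not_and]
        intro hz hz2
        exact absurd (calReward_mono hr hcont hz2) (not_le.2 hz)
      rw [this, measure_empty]
  rw [setLIntegral_congr hsets]
  have hpre : {z | calReward r μ z < c} = calReward r μ ⁻¹' (Set.Iio c) := rfl
  have hrmap : (μ.restrict (calReward r μ ⁻¹' (Set.Iio c))).map (calReward r μ)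
      = (volume.restrict (Set.Ioc 0 1)).restrict (Set.Iio c) := by
    rw [← Measure.restrict_map hcmeas measurableSet_Iio, map_calReward hr hcont]
  have hinter : Set.Iio c ∩ Set.Ioc 0 1 = Set.Ioo 0 c := by
    ext x
    simp only [Set.mem_inter_iff, Set.mem_Iio, Set.mem_Ioc, Set.mem_Ioo]
    constructor
    · rintro ⟨h1, h2, h3⟩; exact ⟨h2, h1⟩
    · rintro ⟨h1, h2⟩; exact ⟨h2, h1, le_trans h2.le hcmem.2⟩
  calc ∫⁻ z in {z | calReward r μ z < c}, h (calReward r μ z) ∂μ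
      = ∫⁻ u, h u ∂((μ.restrict (calReward r μ ⁻¹' (Set.Iio c))).map (calReward r μ)) := by
        rw [hpre]
        rw [lintegral_map' (by rw [hrmap]; exact hh.restrict) hcmeas.aemeasurable]
    _ = ∫⁻ u in Set.Ioo (0:ℝ) c, h u := by
        rw [hrmap, Measure.restrict_restrict measurableSet_Iio, hinter]

theorem lintegral_ofReal_Ioo {q : ℝ → ℝ} {c : ℝ} (hc : c ∈ Set.Icc (0:ℝ) 1)
    (hqi : IntegrableOn q (Set.Ioc (0:ℝ) 1)) (hq0 : ∀ u ∈ Set.Ioc (0:ℝ) 1, 0 ≤ q u) :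
    ∫⁻ u in Set.Ioo (0:ℝ) c, ENNReal.ofReal (q u) = ENNReal.ofReal (∫ t in (0:ℝ)..c, q t) := by
  have h1 : volume.restrict (Set.Ioo (0:ℝ) c) = volume.restrict (Set.Ioc (0:ℝ) c) :=
    Measure.restrict_congr_set Ioo_ae_eq_Ioc
  have hsub : Set.Ioc (0:ℝ) c ⊆ Set.Ioc 0 1 := Set.Ioc_subset_Ioc le_rfl hc.2
  have hqi' : IntegrableOn q (Set.Ioc (0:ℝ) c) := hqi.mono_set hsub
  have hq0' : 0 ≤ᵐ[volume.restrict (Set.Ioc (0:ℝ) c)] q :=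
    ae_restrict_of_forall_mem measurableSet_Ioc (fun x hx => hq0 x (hsub hx))
  rw [intervalIntegral.integral_of_le hc.1,
    ofReal_integral_eq_lintegral_ofReal hqi' hq0']
  exact lintegral_congr (fun _ => rfl) |>.symm ▸
    (by rw [show (volume.restrict (Set.Ioo (0:ℝ) c)) = volume.restrict (Set.Ioc (0:ℝ) c) from h1])

theorem lintegral_ofReal_Ioc1 {q : ℝ → ℝ} (hqi : IntegrableOn q (Set.Ioc (0:ℝ) 1))
    (hq0 : ∀ u ∈ Set.Ioc (0:ℝ) 1, 0 ≤ q u) :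
    ∫⁻ u in Set.Ioc (0:ℝ) 1, ENNReal.ofReal (q u) = ENNReal.ofReal (∫ t in (0:ℝ)..1, q t) := by
  rw [intervalIntegral.integral_of_le zero_le_one,
    ofReal_integral_eq_lintegral_ofReal hqi (ae_restrict_of_forall_mem measurableSet_Ioc hq0)]

theorem integrableOn_of_bounded01 {q : ℝ → ℝ} (hq : AEStronglyMeasurable q volume) {M : ℝ}
    (hM : ∀ u ∈ Set.Icc (0:ℝ) 1, |q u| ≤ M) : IntegrableOn q (Set.Ioc (0:ℝ) 1) := by
  refine Measure.integrableOn_of_bounded (M := M) (by simp [Real.volume_Ioc]) hq ?_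
  exact ae_restrict_of_forall_mem measurableSet_Ioc
    (fun x hx => by rw [Real.norm_eq_abs]; exact hM x ⟨hx.1.le, hx.2⟩)

end Auxiliary

/-- For a calibrated inference-time procedure `T_g` and the
CTRL-aligned policy `π*` (density `e^{Φ(C(y))/β}/Z` w.r.t. `π₀`), the inference-time win
rate `W_r(T_g π* ≻ T_g π₀)` equals
`(∫₀¹ e^{Φ(u)/β} g(F_{Φ,β}(u)) (∫₀ᵘ g) du) / ((∫₀¹ e^{Φ(u)/β} g(F_{Φ,β}(u)) du)·(∫₀¹ g))`;
in particular it depends only on `Φ`, `β` and `g`. -/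
theorem stmt_13 {Y : Type*} [MeasurableSpace Y]
    (π₀ : Measure Y) [IsProbabilityMeasure π₀]
    (r : Y → ℝ) (hr : Measurable r)
    (hcont : ∀ t : ℝ, π₀ {z | r z = t} = 0)
    (β : ℝ) (hβ : 0 < β)
    (Φ : ℝ → ℝ) (hΦm : Measurable Φ)
    (hΦb : ∃ M, ∀ u ∈ Set.Icc (0 : ℝ) 1, |Φ u| ≤ M)
    (Z : ℝ) (hZ : Z = ∫ u in (0 : ℝ)..1, Real.exp (Φ u / β))
    (πstar : Measure Y)
    (hπstar : πstar = π₀.withDensity fun y =>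
      ENNReal.ofReal (Real.exp (Φ (calReward r π₀ y) / β) / Z))
    (g : ℝ → ℝ) (hgm : Measurable g)
    (hg0 : ∀ u ∈ Set.Icc (0 : ℝ) 1, 0 ≤ g u)
    (hgb : ∃ M, ∀ u ∈ Set.Icc (0 : ℝ) 1, g u ≤ M)
    (hgpos : 0 < ∫ t in (0 : ℝ)..1, g t)
    (F : ℝ → ℝ)
    (hF : ∀ u, F u = (∫ t in (0 : ℝ)..u, Real.exp (Φ t / β)) / Z) :
    (∫ y, ∫ z,
        ((if r z < r y then (1 : ℝ) else 0) + (if r y = r z then 1 / 2 else 0))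
          ∂(calProc r g π₀) ∂(calProc r g πstar))
      = (∫ u in (0 : ℝ)..1, Real.exp (Φ u / β) * g (F u) * ∫ t in (0 : ℝ)..u, g t)
          / ((∫ u in (0 : ℝ)..1, Real.exp (Φ u / β) * g (F u))
              * ∫ t in (0 : ℝ)..1, g t) := by
  obtain ⟨M, hM⟩ := hΦb
  obtain ⟨Mg, hMg⟩ := hgb
  -- basic facts about f := exp (Φ ∘ /β)
  have hfmeas : Measurable (fun u => Real.exp (Φ u / β)) :=
    Real.measurable_exp.comp (hΦm.div (measurable_const))
  have hfInt : IntegrableOn (fun u => Real.exp (Φ u / β)) (Set.Ioc (0:ℝ) 1) := by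
    refine integrableOn_of_bounded01 hfmeas.aestronglyMeasurable
      (M := Real.exp (M / β)) (fun u hu => ?_)
    rw [abs_of_pos (Real.exp_pos _)]
    apply Real.exp_le_exp.2
    gcongr
    exact (abs_le.1 (hM u hu)).2
  have hgInt : IntegrableOn g (Set.Ioc (0:ℝ) 1) := by
    refine integrableOn_of_bounded01 hgm.aestronglyMeasurable (M := Mg) (fun u hu => ?_)
    rw [abs_of_nonneg (hg0 u hu)]
    exact hMg u hu
  have hB : 0 < ∫ t in (0:ℝ)..1, g t := hgpos
  have hBne : (∫ t in (0:ℝ)..1, g t) ≠ 0 := ne_of_gt hB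
  have hZpos : 0 < Z := by
    rw [hZ]
    exact intervalIntegral.intervalIntegral_pos_of_pos_on
      ((intervalIntegrable_iff_integrableOn_Ioc_of_le zero_le_one).2 hfInt)
      (fun x _ => Real.exp_pos _) one_pos
  have hZne : Z ≠ 0 := ne_of_gt hZpos
  have hCmeas : Measurable (calReward r π₀) := calReward_measurable hr hcont
  have hCmem : ∀ y, calReward r π₀ y ∈ Set.Icc (0:ℝ) 1 := calReward_mem hr hcont
  haveI hstarprob : IsProbabilityMeasure πstar := by
    constructor
    rw [hπstar, MeasureTheory.withDensity_apply _ MeasurableSet.univ, Measure.restrict_univ]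
    have h1 : ∫⁻ y, ENNReal.ofReal (Real.exp (Φ (calReward r π₀ y) / β) / Z) ∂π₀
        = ∫⁻ u in Set.Ioc (0:ℝ) 1, ENNReal.ofReal (Real.exp (Φ u / β) / Z) :=
      lintegral_calReward (h := fun u => ENNReal.ofReal (Real.exp (Φ u / β) / Z)) hr hcont
        (ENNReal.measurable_ofReal.comp (hfmeas.div measurable_const)).aemeasurable
    rw [h1, lintegral_ofReal_Ioc1 (hfInt.div_const Z) (fun u _ => by positivity),
      intervalIntegral.integral_div, ← hZ, div_self hZne, ENNReal.ofReal_one]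
  have hcontstar : ∀ t : ℝ, πstar {z | r z = t} = 0 := fun t => by
    rw [hπstar]
    exact withDensity_absolutelyContinuous π₀ _ (hcont t)
  have hCsmeas : Measurable (calReward r πstar) := calReward_measurable hr hcontstar
  have hCsmem : ∀ y, calReward r πstar y ∈ Set.Icc (0:ℝ) 1 := calReward_mem hr hcontstar
  have hF01 : ∀ c ∈ Set.Icc (0:ℝ) 1, F c ∈ Set.Icc (0:ℝ) 1 := by
    intro c hc
    rw [hF c]
    constructor
    · apply div_nonneg ?_ hZpos.le
      exact intervalIntegral.integral_nonneg hc.1 (fun u _ => (Real.exp_pos _).le)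
    · rw [div_le_one hZpos, hZ]
      refine intervalIntegral.integral_mono_interval le_rfl hc.1 hc.2
        (MeasureTheory.ae_restrict_of_forall_mem measurableSet_Ioc
          (fun x _ => (Real.exp_pos _).le))
        ((intervalIntegrable_iff_integrableOn_Ioc_of_le zero_le_one).2 hfInt)
  have hCstar : ∀ y, calReward r πstar y = F (calReward r π₀ y) := by
    intro y
    have h2 : πstar {z | r z = r y} = 0 := hcontstar (r y)
    have h1 : πstar {z | r z < r y} = ENNReal.ofReal (F (calReward r π₀ y)) := by
      rw [hπstar, MeasureTheory.withDensity_apply _ (measurableSet_lt hr measurable_const)]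
      rw [setLIntegral_calReward (h := fun u => ENNReal.ofReal (Real.exp (Φ u / β) / Z)) hr
        hcont y (ENNReal.measurable_ofReal.comp (hfmeas.div measurable_const)).aemeasurable]
      rw [lintegral_ofReal_Ioo (hCmem y) (hfInt.div_const Z) (fun u _ => by positivity)]
      rw [hF, intervalIntegral.integral_div]
    show (πstar {z | r z < r y}).toReal + (1/2) * (πstar {z | r z = r y}).toReal
        = F (calReward r π₀ y)
    rw [h1, h2, ENNReal.toReal_ofReal (hF01 _ (hCmem y)).1]
    simp
  have hgaes : AEStronglyMeasurable g (volume.restrict (Set.Ioc (0:ℝ) 1)) :=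
    hgm.aestronglyMeasurable.restrict
  have hB0 : ∫ z, g (calReward r π₀ z) ∂π₀ = ∫ t in (0:ℝ)..1, g t := by
    rw [integral_calReward hr hcont hgaes, intervalIntegral.integral_of_le zero_le_one]
  have hA0 : ∫ z, g (calReward r πstar z) ∂πstar = ∫ t in (0:ℝ)..1, g t := by
    rw [integral_calReward hr hcontstar hgaes, intervalIntegral.integral_of_le zero_le_one]
  have hT0 : calProc r g π₀
      = π₀.withDensity
          (fun y => ENNReal.ofReal (g (calReward r π₀ y) / ∫ t in (0:ℝ)..1, g t)) := by
    unfold calProc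
    rw [hB0]
  have hTstar : calProc r g πstar
      = πstar.withDensity
          (fun y => ENNReal.ofReal (g (calReward r πstar y) / ∫ t in (0:ℝ)..1, g t)) := by
    unfold calProc
    rw [hA0]
  have hgdiv0 : ∀ u ∈ Set.Ioc (0:ℝ) 1, 0 ≤ g u / ∫ t in (0:ℝ)..1, g t :=
    fun u hu => div_nonneg (hg0 u ⟨hu.1.le, hu.2⟩) hB.le
  haveI hT0prob : IsProbabilityMeasure (calProc r g π₀) := by
    constructor
    rw [hT0, MeasureTheory.withDensity_apply _ MeasurableSet.univ, Measure.restrict_univ]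
    rw [lintegral_calReward
      (h := fun u => ENNReal.ofReal (g u / ∫ t in (0:ℝ)..1, g t)) hr hcont
      (ENNReal.measurable_ofReal.comp (hgm.div measurable_const)).aemeasurable]
    rw [lintegral_ofReal_Ioc1 (hgInt.div_const _) hgdiv0, intervalIntegral.integral_div,
      div_self hBne, ENNReal.ofReal_one]
  have hinner : ∀ y : Y, (∫ z, ((if r z < r y then (1:ℝ) else 0)
        + (if r y = r z then 1 / 2 else 0)) ∂(calProc r g π₀))
      = (∫ t in (0:ℝ)..(calReward r π₀ y), g t) / ∫ t in (0:ℝ)..1, g t := by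
    intro y
    have hAset : MeasurableSet {z | r z < r y} := measurableSet_lt hr measurable_const
    have hBset : MeasurableSet {z | r y = r z} := by
      have : {z | r y = r z} = r ⁻¹' {r y} := by ext z; simp [eq_comm]
      rw [this]
      exact hr (measurableSet_singleton _)
    have hi1 : (fun z => if r z < r y then (1:ℝ) else 0)
        = Set.indicator {z | r z < r y} (fun _ => (1:ℝ)) := by
      funext z
      simp [Set.indicator_apply]
    have hi2 : (fun z => if r y = r z then (1/2:ℝ) else 0)
        = Set.indicator {z | r y = r z} (fun _ => (1/2:ℝ)) := by
      funext z
      simp [Set.indicator_apply]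
    have hz2 : (calProc r g π₀) {z | r y = r z} = 0 := by
      rw [hT0]
      refine withDensity_absolutelyContinuous π₀ _ ?_
      have : {z | r y = r z} = {z | r z = r y} := by ext z; exact eq_comm
      rw [this]
      exact hcont (r y)
    have hz1 : (calProc r g π₀) {z | r z < r y}
        = ENNReal.ofReal
            ((∫ t in (0:ℝ)..(calReward r π₀ y), g t) / ∫ t in (0:ℝ)..1, g t) := by
      rw [hT0, MeasureTheory.withDensity_apply _ hAset]
      rw [setLIntegral_calReward
        (h := fun u => ENNReal.ofReal (g u / ∫ t in (0:ℝ)..1, g t)) hr hcont y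
        (ENNReal.measurable_ofReal.comp (hgm.div measurable_const)).aemeasurable]
      rw [lintegral_ofReal_Ioo (hCmem y) (hgInt.div_const _) hgdiv0,
        intervalIntegral.integral_div]
    have hint1 : Integrable (fun z => if r z < r y then (1:ℝ) else 0) (calProc r g π₀) := by
      rw [hi1]
      exact (integrable_indicator_iff hAset).2
        (integrableOn_const (measure_ne_top _ _))
    have hint2 : Integrable (fun z => if r y = r z then (1/2:ℝ) else 0) (calProc r g π₀) := by
      rw [hi2]
      exact (integrable_indicator_iff hBset).2
        (integrableOn_const (measure_ne_top _ _))
    rw [integral_add hint1 hint2, hi1, hi2, integral_indicator_const _ hAset,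
      integral_indicator_const _ hBset, measureReal_def, measureReal_def, hz1, hz2]
    have hGnn : 0 ≤ (∫ t in (0:ℝ)..(calReward r π₀ y), g t) / ∫ t in (0:ℝ)..1, g t := by
      apply div_nonneg ?_ hB.le
      exact intervalIntegral.integral_nonneg (hCmem y).1
        (fun u hu => hg0 u ⟨hu.1, hu.2.trans (hCmem y).2⟩)
    rw [ENNReal.toReal_ofReal hGnn]
    simp
  have houter : (∫ y, ∫ z, ((if r z < r y then (1:ℝ) else 0)
        + (if r y = r z then 1 / 2 else 0)) ∂(calProc r g π₀) ∂(calProc r g πstar))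
      = ∫ y, ((∫ t in (0:ℝ)..(calReward r π₀ y), g t) / ∫ t in (0:ℝ)..1, g t)
          ∂(calProc r g πstar) :=
    integral_congr_ae (Filter.Eventually.of_forall hinner)
  rw [houter]
  -- measurability of F and of the primitive of g on [0,1]
  have hFc : ContinuousOn F (Set.Icc (0:ℝ) 1) := by
    have h1 : ContinuousOn (fun u => (∫ t in (0:ℝ)..u, Real.exp (Φ t / β)) / Z)
        (Set.Icc (0:ℝ) 1) := by
      apply ContinuousOn.div_const
      have h2 : IntegrableOn (fun t => Real.exp (Φ t / β)) (Set.uIcc (0:ℝ) 1) := by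
        rw [Set.uIcc_of_le zero_le_one, integrableOn_Icc_iff_integrableOn_Ioc]
        exact hfInt
      have h3 : ContinuousOn (fun u => ∫ t in (0:ℝ)..u, Real.exp (Φ t / β))
          (Set.uIcc (0:ℝ) 1) := intervalIntegral.continuousOn_primitive_interval h2
      rwa [Set.uIcc_of_le zero_le_one] at h3
    have h4 : F = fun u => (∫ t in (0:ℝ)..u, Real.exp (Φ t / β)) / Z := funext hF
    rw [h4]
    exact h1
  have hFae : AEMeasurable F (volume.restrict (Set.Ioc (0:ℝ) 1)) :=
    (hFc.aemeasurable measurableSet_Icc).mono_measure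
      (Measure.restrict_mono Set.Ioc_subset_Icc_self le_rfl)
  have hGc : ContinuousOn (fun u => ∫ t in (0:ℝ)..u, g t) (Set.Icc (0:ℝ) 1) := by
    have h2 : IntegrableOn g (Set.uIcc (0:ℝ) 1) := by
      rw [Set.uIcc_of_le zero_le_one, integrableOn_Icc_iff_integrableOn_Ioc]
      exact hgInt
    have h3 : ContinuousOn (fun u => ∫ t in (0:ℝ)..u, g t) (Set.uIcc (0:ℝ) 1) :=
      intervalIntegral.continuousOn_primitive_interval h2
    rwa [Set.uIcc_of_le zero_le_one] at h3
  have hGae : AEMeasurable (fun u => ∫ t in (0:ℝ)..u, g t)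
      (volume.restrict (Set.Ioc (0:ℝ) 1)) :=
    (hGc.aemeasurable measurableSet_Icc).mono_measure
      (Measure.restrict_mono Set.Ioc_subset_Icc_self le_rfl)
  -- compute the normalisation integral a second way, to identify A with Z·B
  have hA2 : ∫ z, g (calReward r πstar z) ∂πstar
      = (∫ u in (0:ℝ)..1, Real.exp (Φ u / β) * g (F u)) / Z := by
    have h1 : (fun z => g (calReward r πstar z)) = fun z => g (F (calReward r π₀ z)) :=
      funext fun z => by rw [hCstar z]
    rw [h1, hπstar]
    rw [show (fun y => ENNReal.ofReal (Real.exp (Φ (calReward r π₀ y) / β) / Z))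
        = fun y => ((Real.toNNReal (Real.exp (Φ (calReward r π₀ y) / β) / Z) : NNReal) : ENNReal)
        from rfl]
    rw [integral_withDensity_eq_integral_smul
      (show Measurable fun y => Real.toNNReal (Real.exp (Φ (calReward r π₀ y) / β) / Z) from
        measurable_real_toNNReal.comp ((hfmeas.comp hCmeas).div_const Z)) _]
    have h2 : (fun y => (Real.toNNReal (Real.exp (Φ (calReward r π₀ y) / β) / Z))
          • g (F (calReward r π₀ y)))
        = fun y => (fun u => Real.exp (Φ u / β) / Z * g (F u)) (calReward r π₀ y) :=
      funext fun y => by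
        rw [NNReal.smul_def, Real.coe_toNNReal _ (by positivity), smul_eq_mul]
    rw [h2, integral_calReward hr hcont
      (show AEStronglyMeasurable (fun u => Real.exp (Φ u / β) / Z * g (F u))
          (volume.restrict (Set.Ioc (0:ℝ) 1)) from
        ((hfmeas.aemeasurable.restrict.div_const Z).mul
          (hgm.comp_aemeasurable hFae)).aestronglyMeasurable)]
    rw [← intervalIntegral.integral_of_le zero_le_one]
    rw [show (fun u => Real.exp (Φ u / β) / Z * g (F u))
        = fun u => (Real.exp (Φ u / β) * g (F u)) / Z from funext fun u => by ring]
    rw [intervalIntegral.integral_div]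
  have hZB : (∫ u in (0:ℝ)..1, Real.exp (Φ u / β) * g (F u)) = Z * ∫ t in (0:ℝ)..1, g t := by
    have h1 : (∫ t in (0:ℝ)..1, g t)
        = (∫ u in (0:ℝ)..1, Real.exp (Φ u / β) * g (F u)) / Z := hA0.symm.trans hA2
    rw [eq_div_iff hZne] at h1
    rw [← h1]
    ring
  -- unfold the outer integral through the two densities
  rw [hTstar]
  rw [show (fun y => ENNReal.ofReal (g (calReward r πstar y) / ∫ t in (0:ℝ)..1, g t))
      = fun y => ((Real.toNNReal (g (calReward r πstar y) / ∫ t in (0:ℝ)..1, g t) : NNReal)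
        : ENNReal) from rfl]
  rw [integral_withDensity_eq_integral_smul
    (show Measurable fun y => Real.toNNReal (g (calReward r πstar y) / ∫ t in (0:ℝ)..1, g t) from
      measurable_real_toNNReal.comp ((hgm.comp hCsmeas).div_const _)) _]
  have hsm1 : (fun y => (Real.toNNReal (g (calReward r πstar y) / ∫ t in (0:ℝ)..1, g t))
        • ((∫ t in (0:ℝ)..(calReward r π₀ y), g t) / ∫ t in (0:ℝ)..1, g t))
      = fun y => (g (F (calReward r π₀ y)) / ∫ t in (0:ℝ)..1, g t)
        * ((∫ t in (0:ℝ)..(calReward r π₀ y), g t) / ∫ t in (0:ℝ)..1, g t) :=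
    funext fun y => by
      rw [NNReal.smul_def, Real.coe_toNNReal _ (div_nonneg (hg0 _ (hCsmem y)) hB.le), hCstar y,
        smul_eq_mul]
  rw [hsm1, hπstar]
  rw [show (fun y => ENNReal.ofReal (Real.exp (Φ (calReward r π₀ y) / β) / Z))
      = fun y => ((Real.toNNReal (Real.exp (Φ (calReward r π₀ y) / β) / Z) : NNReal) : ENNReal)
      from rfl]
  rw [integral_withDensity_eq_integral_smul
    (show Measurable fun y => Real.toNNReal (Real.exp (Φ (calReward r π₀ y) / β) / Z) from
      measurable_real_toNNReal.comp ((hfmeas.comp hCmeas).div_const Z)) _]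
  have hsm2 : (fun y => (Real.toNNReal (Real.exp (Φ (calReward r π₀ y) / β) / Z))
        • ((g (F (calReward r π₀ y)) / ∫ t in (0:ℝ)..1, g t)
          * ((∫ t in (0:ℝ)..(calReward r π₀ y), g t) / ∫ t in (0:ℝ)..1, g t)))
      = fun y => (fun u => Real.exp (Φ u / β) / Z * ((g (F u) / ∫ t in (0:ℝ)..1, g t)
          * ((∫ t in (0:ℝ)..u, g t) / ∫ t in (0:ℝ)..1, g t))) (calReward r π₀ y) :=
    funext fun y => by
      rw [NNReal.smul_def, Real.coe_toNNReal _ (by positivity), smul_eq_mul]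
  rw [hsm2]
  rw [integral_calReward hr hcont
    (show AEStronglyMeasurable (fun u => Real.exp (Φ u / β) / Z
          * ((g (F u) / ∫ t in (0:ℝ)..1, g t) * ((∫ t in (0:ℝ)..u, g t) / ∫ t in (0:ℝ)..1, g t)))
        (volume.restrict (Set.Ioc (0:ℝ) 1)) from
      ((hfmeas.aemeasurable.restrict.div_const Z).mul
        (((hgm.comp_aemeasurable hFae).div_const _).mul
          (hGae.div_const _))).aestronglyMeasurable)]
  rw [← intervalIntegral.integral_of_le zero_le_one, hZB]
  rw [show (fun u => Real.exp (Φ u / β) / Z * ((g (F u) / ∫ t in (0:ℝ)..1, g t)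
        * ((∫ t in (0:ℝ)..u, g t) / ∫ t in (0:ℝ)..1, g t)))
      = fun u => (Real.exp (Φ u / β) * g (F u) * ∫ t in (0:ℝ)..u, g t)
          / (Z * (∫ t in (0:ℝ)..1, g t) * ∫ t in (0:ℝ)..1, g t) from
    funext fun u => by field_simp]
  rw [intervalIntegral.integral_div]
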